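/- Let p and q be distinct primes, let K be a finite abelian p-group, and let σ be an automorphism of K of order q such that for every proper subgroup S of K with σ(S) = S, the restriction of σ to S is the identity map. Then K has exponent p, i.e., every element x of K satisfies p·x = 0. -/

import Mathlib

/-- Let `p` and `q` be distinct primes, let `K` be a finite abelian `p`-group, and let `σ` be
an automorphism of `K` of order `q` such that for every proper subgroup `S` of `K` with
`σ(S) = S`, the restriction of `σ` to `S` is the identity. Then `K` has exponent `p`. -/
theorem stmt_0 (p q : ℕ) (hp : p.Prime) (hq : q.Prime) (hpq : p ≠ q)
    (K : Type*) [AddCommGroup K] [Fintype K] (hK : ∃ n : ℕ, Fintype.card K = p ^ n)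
    (σ : AddAut K) (hσ : addOrderOf σ = q)
    (hinv : ∀ S : AddSubgroup K, S ≠ ⊤ → AddSubgroup.map σ.toAddMonoidHom S = S →
      ∀ x ∈ S, σ x = x) :
    ∀ x : K, p • x = 0 := by
  obtain ⟨n, hn⟩ := hK
  -- τ y = σ y - y
  set τ : K →+ K := σ.toAddMonoidHom - AddMonoidHom.id K with hτ
  have hτdef : ∀ y : K, τ y = σ y - y := fun y => rfl
  have hστ : ∀ y : K, σ (τ y) = τ (σ y) := by
    intro y
    simp [hτdef, map_sub]
  -- σ ≠ 1
  have hσne : σ ≠ 0 := by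
    intro h
    rw [h, addOrderOf_zero] at hσ
    exact hq.ne_one hσ.symm
  by_cases htop : τ.range = ⊤
  · -- range τ = ⊤ : every element is τ w; show p • (τ w) = τ (p • w) = 0
    -- P = p • K is a proper σ-invariant subgroup, hence fixed pointwise
    set μ : K →+ K := p • AddMonoidHom.id K with hμ
    have hμdef : ∀ y : K, μ y = p • y := fun y => rfl
    by_cases hone : Fintype.card K = 1
    · intro x
      have : Subsingleton K := Fintype.card_le_one_iff_subsingleton.mp hone.le
      simp [Subsingleton.elim x 0]
    · -- P proper
      haveI : Fact p.Prime := ⟨hp⟩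
      have hPtop : μ.range ≠ ⊤ := by
        intro hP
        have hsurj : Function.Surjective μ := by
          intro z
          have : z ∈ μ.range := hP ▸ AddSubgroup.mem_top z
          exact this
        have hinj : Function.Injective μ := (Finite.injective_iff_surjective).mpr hsurj
        have hdvd : p ∣ Fintype.card K := by
          rw [hn]
          refine dvd_pow_self p ?_
          rintro rfl
          simp at hn
          exact hone hn
        obtain ⟨y, hy⟩ := exists_prime_addOrderOf_dvd_card p hdvd
        have hy0 : μ y = μ 0 := by
          simp [hμdef, ← hy, addOrderOf_nsmul_eq_zero]
        have : y = 0 := hinj hy0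
        rw [this, addOrderOf_zero] at hy
        exact hp.ne_one hy.symm
      have hPinv : AddSubgroup.map σ.toAddMonoidHom μ.range = μ.range := by
        ext z
        simp only [AddSubgroup.mem_map, AddMonoidHom.mem_range]
        constructor
        · rintro ⟨_, ⟨w, rfl⟩, rfl⟩
          exact ⟨σ w, by simp [hμdef]⟩
        · rintro ⟨w, rfl⟩
          exact ⟨μ (σ.symm w), ⟨σ.symm w, rfl⟩, by simp [hμdef, map_nsmul]⟩
      have hfix : ∀ y : K, σ (p • y) = p • y := fun y =>
        hinv μ.range hPtop hPinv (p • y) ⟨y, rfl⟩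
      intro x
      obtain ⟨w, rfl⟩ : ∃ w, τ w = x := by
        have : x ∈ τ.range := htop ▸ AddSubgroup.mem_top x
        exact this
      have : p • τ w = τ (p • w) := (map_nsmul τ p w).symm
      rw [this, hτdef, hfix, sub_self]
  · -- range τ proper: σ fixes range τ, so τ ∘ τ = 0, then σ^k x = x + k • τ x
    have hRinv : AddSubgroup.map σ.toAddMonoidHom τ.range = τ.range := by
      ext z
      simp only [AddSubgroup.mem_map, AddMonoidHom.mem_range]
      constructor
      · rintro ⟨_, ⟨w, rfl⟩, rfl⟩
        exact ⟨σ w, (hστ w).symm⟩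
      · rintro ⟨w, rfl⟩
        refine ⟨τ (σ.symm w), ⟨σ.symm w, rfl⟩, ?_⟩
        show σ (τ (σ.symm w)) = τ w
        rw [hστ]; simp
    have hfix : ∀ y : K, σ (τ y) = τ y := fun y =>
      hinv τ.range htop hRinv (τ y) ⟨y, rfl⟩
    have hττ : ∀ y : K, τ (τ y) = 0 := by
      intro y
      rw [hτdef (τ y), hfix, sub_self]
    have hpow : ∀ (k : ℕ) (x : K), (k • σ) x = x + k • τ x := by
      intro k
      induction k with
      | zero => intro x; simp
      | succ k ih =>
        intro x
        have : ((k + 1) • σ) x = σ ((k • σ) x) := by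
          rw [succ_nsmul']; rfl
        rw [this, ih, map_add, map_nsmul, hfix]
        have hσx : σ x = x + τ x := by rw [hτdef]; abel
        rw [hσx, succ_nsmul]
        abel
    have hτ0 : ∀ x : K, τ x = 0 := by
      intro x
      have hq0 : q • τ x = 0 := by
        have : (q • σ) x = x := by
          rw [← hσ, addOrderOf_nsmul_eq_zero σ]; rfl
        have h2 := hpow q x
        rw [this] at h2
        exact add_eq_left.mp h2.symm
      have hdq : addOrderOf (τ x) ∣ q := addOrderOf_dvd_of_nsmul_eq_zero hq0
      have hdp : addOrderOf (τ x) ∣ p ^ n := hn ▸ addOrderOf_dvd_card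
      have hcop : Nat.Coprime q (p ^ n) :=
        (Nat.coprime_primes hq hp).mpr (Ne.symm hpq) |>.pow_right n
      have h1 : addOrderOf (τ x) ∣ Nat.gcd q (p ^ n) := Nat.dvd_gcd hdq hdp
      rw [Nat.Coprime] at hcop
      rw [hcop, Nat.dvd_one] at h1
      have h2 := addOrderOf_nsmul_eq_zero (τ x)
      rwa [h1, one_nsmul] at h2
    exfalso
    apply hσne
    ext x
    have h := hτ0 x
    rw [hτdef] at h
    simpa using sub_eq_zero.mp h
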